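/- Let $I$ be a square-free monomial ideal of $R = k[x_1,\ldots,x_n]$ over a field $k$ with minimal primes $P_1, \ldots, P_r$ (which are monomial primes, and $I = P_1 \cap \cdots \cap P_r$). Then for each $m \in \mathbb{N}$, $I^m$ is not $(mr - 1)$-absorbing; hence $\omega(I^m) \ge m\,\omega(I) = mr$. -/

import Mathlib

open Ideal Finset MvPolynomial

/-- `I` is an `N`-absorbing ideal: whenever a product of `N+1` elements lies in `I`,
the product of some `N` of them (omitting one factor) lies in `I`. -/
def IsNAbsorbing {R : Type*} [CommRing R] (I : Ideal R) (N : ℕ) : Prop :=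
  ∀ x : Fin (N + 1) → R, (∏ i, x i) ∈ I →
    ∃ j, (∏ i ∈ Finset.univ.erase j, x i) ∈ I

/-- `ω(I)`: the least `N` such that `I` is `N`-absorbing. -/
noncomputable def omegaAbs {R : Type*} [CommRing R] (I : Ideal R) : ℕ :=
  sInf {N | IsNAbsorbing I N}


lemma prod_erase_eq_update {M : ℕ} {R : Type*} [CommMonoid R] (x : Fin M → R) (j : Fin M) :
    ∏ i ∈ Finset.univ.erase j, x i = ∏ i, Function.update x j 1 i := by
  rw [← Finset.prod_erase Finset.univ (f := Function.update x j 1) (Function.update_self j 1 x)]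
  exact Finset.prod_congr rfl fun i hi => (Function.update_of_ne (Finset.mem_erase.mp hi).1 _ _).symm

lemma IsNAbsorbing.succ {R : Type*} [CommRing R] {I : Ideal R} {N : ℕ}
    (h : IsNAbsorbing I N) : IsNAbsorbing I (N + 1) := by
  intro x hx
  set z : Fin N → R := fun i => x i.succ.succ with hz
  set y : Fin (N + 1) → R := Fin.cons (x 0 * x 1) z with hy
  have hxy : ∏ i, y i = ∏ i, x i := by
    rw [hy, Fin.prod_cons, Fin.prod_univ_succ x, Fin.prod_univ_succ (fun i : Fin (N+1) => x i.succ),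
      Fin.succ_zero_eq_one, mul_assoc]
  obtain ⟨j, hj⟩ := h y (by rwa [hxy])
  rw [prod_erase_eq_update] at hj
  induction j using Fin.cases with
  | zero =>
      refine ⟨0, ?_⟩
      rw [prod_erase_eq_update]
      have h1 : ∏ i, Function.update y 0 1 i = ∏ i, z i := by
        rw [hy, Fin.update_cons_zero, Fin.prod_cons, one_mul]
      rw [h1] at hj
      have h2 : ∏ i, Function.update x 0 1 i = x 1 * ∏ i, z i := by
        rw [Fin.prod_univ_succ, Fin.prod_univ_succ]
        simp [Function.update_of_ne, Fin.succ_ne_zero, hz]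
      rw [h2]
      exact Ideal.mul_mem_left _ _ hj
  | succ i =>
      refine ⟨i.succ.succ, ?_⟩
      rw [prod_erase_eq_update]
      have h1 : ∏ l, Function.update y i.succ 1 l = (x 0 * x 1) * ∏ l, Function.update z i 1 l := by
        rw [hy, ← Fin.cons_update, Fin.prod_cons]
      rw [h1] at hj
      have e0 : Function.update x i.succ.succ 1 0 = x 0 :=
        Function.update_of_ne (Fin.succ_ne_zero _).symm _ _
      have e1 : Function.update x i.succ.succ 1 ((0 : Fin (N+1)).succ) = x 1 := by
        rw [Function.update_of_ne (by simp [Fin.ext_iff]) _ _, Fin.succ_zero_eq_one]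
      have e2 : ∀ l : Fin N, Function.update x i.succ.succ 1 l.succ.succ
          = Function.update z i 1 l := by
        intro l
        rcases eq_or_ne l i with rfl | hne
        · simp
        · rw [Function.update_of_ne (by simpa [Fin.succ_inj] using hne) _ _,
            Function.update_of_ne hne _ _]
      have h2 : ∏ l, Function.update x i.succ.succ 1 l
          = x 0 * (x 1 * ∏ l : Fin N, Function.update z i 1 l) := by
        rw [Fin.prod_univ_succ, Fin.prod_univ_succ, e0, e1]
        congr 1
        congr 1
        exact Finset.prod_congr rfl fun l _ => e2 l
      rw [h2, ← mul_assoc]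
      exact hj

lemma IsNAbsorbing.mono {R : Type*} [CommRing R] {I : Ideal R} {N N' : ℕ}
    (h : IsNAbsorbing I N) (hN : N ≤ N') : IsNAbsorbing I N' := by
  induction N' with
  | zero => simpa [Nat.le_zero.mp hN] using h
  | succ M ih =>
      rcases Nat.lt_or_ge N (M+1) with h1 | h2
      · exact (ih (by omega)).succ
      · have : N = M + 1 := by omega
        subst this; exact h

lemma prod_mem_pow_card {R : Type*} [CommRing R] (P : Ideal R) {ι : Type*} [DecidableEq ι]
    (T : Finset ι) (x : ι → R) (h : ∀ i ∈ T, x i ∈ P) : ∏ i ∈ T, x i ∈ P ^ T.card := by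
  induction T using Finset.induction_on with
  | empty => simp
  | @insert a T ha ih =>
      rw [Finset.prod_insert ha, Finset.card_insert_of_notMem ha, pow_succ, mul_comm (P ^ T.card)]
      exact Ideal.mul_mem_mul (h a (Finset.mem_insert_self a T))
        (ih fun i hi => h i (Finset.mem_insert_of_mem hi))

lemma primary_sub {R : Type*} [CommRing R] {Q : Ideal R} (hQ : Q.IsPrimary) {s : ℕ}
    (hs : Q.radical ^ s ≤ Q) {M : ℕ} (x : Fin M → R) (hx : ∏ i, x i ∈ Q) :
    ∃ T : Finset (Fin M), T.card ≤ s ∧ ∏ i ∈ T, x i ∈ Q := by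
  classical
  set A : Finset (Fin M) := Finset.univ.filter (fun i => x i ∈ Q.radical) with hA
  by_cases hc : s ≤ A.card
  · obtain ⟨T, hTA, hTcard⟩ := Finset.exists_subset_card_eq hc
    refine ⟨T, hTcard.le, ?_⟩
    refine hs ?_
    rw [← hTcard]
    exact prod_mem_pow_card _ _ _ fun i hi => (Finset.mem_filter.mp (hTA hi)).2
  · refine ⟨A, by omega, ?_⟩
    have hsplit : (∏ i ∈ A, x i) * ∏ i ∈ Finset.univ.filter (fun i => ¬ x i ∈ Q.radical), x i
        = ∏ i, x i := Finset.prod_filter_mul_prod_filter_not _ _ _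
    have hmem : (∏ i ∈ A, x i) * ∏ i ∈ Finset.univ.filter (fun i => ¬ x i ∈ Q.radical), x i ∈ Q := by
      rw [hsplit]; exact hx
    rcases (Ideal.isPrimary_iff.mp hQ).2 hmem with h1 | h2
    · exact h1
    · exfalso
      have hprime : Q.radical.IsPrime := Ideal.isPrime_radical hQ
      rw [Ideal.IsPrime.prod_mem_iff (hp := hprime)] at h2
      obtain ⟨i, hi, hi2⟩ := h2
      exact (Finset.mem_filter.mp hi).2 hi2

lemma exists_isNAbsorbing {R : Type*} [CommRing R] [IsNoetherianRing R] (I : Ideal R) :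
    ∃ N, IsNAbsorbing I N := by
  classical
  obtain ⟨s, hsinf, hsprim⟩ := Submodule.isLasker R R I
  have hpow : ∀ J : {J // J ∈ s}, ∃ nJ : ℕ, Ideal.radical (J : Ideal R) ^ nJ ≤ (J : Ideal R) :=
    fun J => Ideal.exists_radical_pow_le_of_fg _ (IsNoetherian.noetherian _)
  choose nJ hnJ using hpow
  set N := ∑ J ∈ s.attach, nJ J with hN
  refine ⟨N, ?_⟩
  intro x hx
  have hxJ : ∀ J : {J // J ∈ s}, ∏ i, x i ∈ (J : Ideal R) := by
    intro J
    rw [← hsinf] at hx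
    exact (Finset.inf_le J.2 : s.inf id ≤ id (J : Ideal R)) hx
  choose T hT1 hT2 using fun J : {J // J ∈ s} => primary_sub (hsprim J.2) (hnJ J) x (hxJ J)
  set U : Finset (Fin (N + 1)) := s.attach.biUnion T with hU
  have hUcard : U.card ≤ N :=
    (Finset.card_biUnion_le).trans (Finset.sum_le_sum fun J _ => hT1 J)
  have hj : ∃ j, j ∉ U := by
    by_contra h
    push_neg at h
    have := Finset.card_le_card (fun j _ => h j : (Finset.univ : Finset (Fin (N+1))) ⊆ U)
    rw [Finset.card_univ, Fintype.card_fin] at this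
    omega
  obtain ⟨j, hjU⟩ := hj
  refine ⟨j, ?_⟩
  rw [← hsinf]
  rw [show (s.inf id) = s.inf (fun J => J) from rfl]
  rw [Submodule.mem_finsetInf]
  intro J hJ
  have hsub : T ⟨J, hJ⟩ ⊆ Finset.univ.erase j := by
    intro i hi
    refine Finset.mem_erase.mpr ⟨?_, Finset.mem_univ i⟩
    rintro rfl
    exact hjU (Finset.mem_biUnion.mpr ⟨⟨J, hJ⟩, Finset.mem_attach _ _, hi⟩)
  rw [← Finset.prod_sdiff hsub]
  exact Ideal.mul_mem_left _ _ (hT2 ⟨J, hJ⟩)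

lemma sum_X_ne_zero {k : Type*} [Field k] {n : ℕ} {S : Finset (Fin n)} (hS : S.Nonempty) :
    (∑ t ∈ S, (X t : MvPolynomial (Fin n) k)) ≠ 0 := by
  obtain ⟨t0, ht0⟩ := hS
  intro h0
  have h1 := congrArg (eval (fun t => if t = t0 then (1 : k) else 0)) h0
  rw [map_sum, map_zero] at h1
  simp only [eval_X] at h1
  rw [Finset.sum_ite_eq' S t0 (fun _ => (1 : k)), if_pos ht0] at h1
  exact one_ne_zero h1

lemma not_absorbing_key {k : Type*} [Field k] (n r : ℕ) (hr : 0 < r)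
    (V : Fin r → Finset (Fin n)) (hV : ∀ i, (V i).Nonempty)
    (hinc : ∀ i j, i ≠ j →
      ¬ Ideal.span ((fun t => (X t : MvPolynomial (Fin n) k)) '' ↑(V i)) ≤
        Ideal.span ((fun t => (X t : MvPolynomial (Fin n) k)) '' ↑(V j)))
    (I : Ideal (MvPolynomial (Fin n) k))
    (hI : I = ⨅ i, Ideal.span ((fun t => (X t : MvPolynomial (Fin n) k)) '' ↑(V i)))
    (m : ℕ) (hm : 1 ≤ m) : ¬ IsNAbsorbing (I ^ m) (m * r - 1) := by
  classical
  set P : Fin r → Ideal (MvPolynomial (Fin n) k) := fun i => Ideal.span ((fun t => (X t : MvPolynomial (Fin n) k)) '' ↑(V i)) with hP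
  set f : Fin r → MvPolynomial (Fin n) k := fun i => ∑ t ∈ V i, X t with hf
  have hfP : ∀ i, f i ∈ P i := by
    intro i
    exact Ideal.sum_mem _ fun t ht => Ideal.subset_span ⟨t, Finset.mem_coe.mpr ht, rfl⟩
  have hfne : ∀ i, f i ≠ 0 := fun i => sum_X_ne_zero (hV i)
  have hIle : ∀ i, I ≤ P i := fun i => hI ▸ iInf_le _ i
  have hfI : (∏ i, f i) ∈ I := by
    rw [hI, Submodule.mem_iInf]
    intro i
    rw [← Finset.mul_prod_erase Finset.univ f (Finset.mem_univ i)]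
    exact Ideal.mul_mem_right _ _ (hfP i)
  intro habs
  have hmr : 1 ≤ m * r := Nat.mul_pos hm hr
  have hM : m * r - 1 + 1 = m * r := by omega
  set e : Fin (m * r - 1 + 1) ≃ Fin m × Fin r := (finCongr hM).trans finProdFinEquiv.symm with he
  set x : Fin (m * r - 1 + 1) → MvPolynomial (Fin n) k := fun idx => f (e idx).2 with hx
  have hprod : ∏ idx, x idx = (∏ i, f i) ^ m := by
    rw [hx]
    rw [show (∏ idx, f (e idx).2) = ∏ p : Fin m × Fin r, f p.2 from
      Equiv.prod_comp e (fun p => f p.2)]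
    rw [Fintype.prod_prod_type]
    simp
  obtain ⟨j0, hj0⟩ := habs x (by rw [hprod]; exact Ideal.pow_mem_pow hfI m)
  set i0 := (e j0).2 with hi0
  have hxj0 : x j0 = f i0 := rfl
  have key : f i0 * ∏ idx ∈ Finset.univ.erase j0, x idx = (∏ i, f i) ^ m := by
    rw [← hprod, ← hxj0]
    exact Finset.mul_prod_erase _ x (Finset.mem_univ j0)
  set g : MvPolynomial (Fin n) k := f i0 ^ (m - 1) * ∏ i ∈ Finset.univ.erase i0, f i ^ m with hg
  have key2 : f i0 * g = (∏ i, f i) ^ m := by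
    rw [hg, ← mul_assoc, ← pow_succ' (f i0) (m - 1), show m - 1 + 1 = m from by omega,
      Finset.mul_prod_erase Finset.univ (fun i => f i ^ m) (Finset.mem_univ i0),
      Finset.prod_pow]
  have hge : (∏ idx ∈ Finset.univ.erase j0, x idx) = g :=
    mul_left_cancel₀ (hfne i0) (key.trans key2.symm)
  have hgmem : g ∈ P i0 ^ m := Ideal.pow_right_mono (hIle i0) m (hge ▸ hj0)
  -- the algebra map
  set Φ : MvPolynomial (Fin n) k →ₐ[k] Polynomial (MvPolynomial (Fin n) k) := aeval (fun t =>
    if t ∈ V i0 then Polynomial.C (X t) * Polynomial.X else Polynomial.C (X t)) with hΦ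
  -- claim 1 : coeff (m-1) vanishes on P i0 ^ m
  have claim1 : ∀ p ∈ P i0 ^ m, (Φ p).coeff (m - 1) = 0 := by
    intro p hp
    have h1 : Ideal.map Φ (P i0) ≤
        Ideal.span {(Polynomial.X : Polynomial (MvPolynomial (Fin n) k))} := by
      rw [hP, Ideal.map_span, Ideal.span_le]
      rintro _ ⟨_, ⟨t, ht, rfl⟩, rfl⟩
      have : Φ (X t) = Polynomial.C (X t) * Polynomial.X := by
        rw [hΦ, aeval_X, if_pos (Finset.mem_coe.mp ht)]
      rw [SetLike.mem_coe, this, Ideal.mem_span_singleton]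
      exact Dvd.intro_left _ rfl
    have h2 : Φ p ∈ Ideal.span {(Polynomial.X : Polynomial (MvPolynomial (Fin n) k))} ^ m := by
      have := Ideal.mem_map_of_mem
        (Φ : MvPolynomial (Fin n) k →+* Polynomial (MvPolynomial (Fin n) k)) hp
      rw [Ideal.map_pow] at this
      exact Ideal.pow_right_mono h1 m this
    rw [Ideal.span_singleton_pow, Ideal.mem_span_singleton] at h2
    obtain ⟨q, hq⟩ := h2
    rw [hq, mul_comm, Polynomial.coeff_mul_X_pow', if_neg (by omega)]
  -- claim 2 : coeff (m-1) of Φ g is nonzero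
  have hΦfi0 : Φ (f i0) = Polynomial.C (f i0) * Polynomial.X := by
    rw [hf, map_sum]
    simp only [hΦ, aeval_X]
    rw [Finset.sum_congr rfl (fun t ht => if_pos ht), ← Finset.sum_mul, ← map_sum]
  have hcc : ∀ i, Polynomial.constantCoeff (Φ (f i))
      = ∑ t ∈ (V i).filter (fun t => t ∉ V i0), X t := by
    intro i
    rw [hf, map_sum, map_sum]
    rw [Finset.sum_filter]
    refine Finset.sum_congr rfl fun t ht => ?_
    simp only [hΦ, aeval_X]
    by_cases h : t ∈ V i0
    · rw [if_pos h, if_neg (not_not_intro h)]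
      simp
    · rw [if_neg h, if_pos h]
      simp
  have hout : ∀ i, i ≠ i0 → ((V i).filter (fun t => t ∉ V i0)).Nonempty := by
    intro i hi
    rw [Finset.filter_nonempty_iff]
    by_contra h
    push_neg at h
    refine hinc i i0 hi (Ideal.span_mono (Set.image_mono ?_))
    intro t ht
    exact Finset.mem_coe.mpr (h t (Finset.mem_coe.mp ht))
  have claim2 : (Φ g).coeff (m - 1)
      = f i0 ^ (m - 1) * ∏ i ∈ Finset.univ.erase i0,
          (∑ t ∈ (V i).filter (fun t => t ∉ V i0), X t) ^ m := by
    have hsplit : Φ g = Polynomial.X ^ (m - 1) *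
        (Polynomial.C (f i0) ^ (m - 1) * Φ (∏ i ∈ Finset.univ.erase i0, f i ^ m)) := by
      rw [hg, _root_.map_mul, _root_.map_pow, hΦfi0, mul_pow]
      ring
    have hco := Polynomial.coeff_X_pow_mul
      (Polynomial.C (f i0) ^ (m - 1) * Φ (∏ i ∈ Finset.univ.erase i0, f i ^ m)) (m - 1) 0
    rw [zero_add] at hco
    rw [hsplit, hco]
    have hccc : ∀ p : Polynomial (MvPolynomial (Fin n) k),
        p.coeff 0 = Polynomial.constantCoeff p := fun p => rfl
    rw [hccc, _root_.map_mul, _root_.map_pow]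
    congr 1
    · congr 1
      simp
    · rw [map_prod, map_prod]
      refine Finset.prod_congr rfl fun i _ => ?_
      rw [_root_.map_pow, _root_.map_pow, hcc]
  have hne : (Φ g).coeff (m - 1) ≠ 0 := by
    rw [claim2]
    refine mul_ne_zero (pow_ne_zero _ (hfne i0)) ?_
    rw [Finset.prod_ne_zero_iff]
    intro i hi
    exact pow_ne_zero _ (sum_X_ne_zero (hout i (Finset.mem_erase.mp hi).1))
  exact hne (claim1 g hgmem)

theorem squarefree_monomial_omega_pow_ge {k : Type*} [Field k] (n r : ℕ) (hr : 0 < r)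
    (V : Fin r → Finset (Fin n)) (hV : ∀ i, (V i).Nonempty)
    (hinc : ∀ i j, i ≠ j →
      ¬ Ideal.span ((fun t => (X t : MvPolynomial (Fin n) k)) '' ↑(V i)) ≤
        Ideal.span ((fun t => (X t : MvPolynomial (Fin n) k)) '' ↑(V j)))
    (I : Ideal (MvPolynomial (Fin n) k))
    (hI : I = ⨅ i, Ideal.span ((fun t => (X t : MvPolynomial (Fin n) k)) '' ↑(V i))) :
    ∀ m : ℕ, 1 ≤ m → ¬ IsNAbsorbing (I ^ m) (m * r - 1) ∧ m * r ≤ omegaAbs (I ^ m) := by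
  intro m hm
  have hnot : ¬ IsNAbsorbing (I ^ m) (m * r - 1) :=
    not_absorbing_key n r hr V hV hinc I hI m hm
  refine ⟨hnot, ?_⟩
  obtain ⟨N0, hN0⟩ := exists_isNAbsorbing (I ^ m)
  have hmemS : sInf {N | IsNAbsorbing (I ^ m) N} ∈ {N | IsNAbsorbing (I ^ m) N} :=
    Nat.sInf_mem ⟨N0, hN0⟩
  rw [omegaAbs]
  by_contra hlt
  push_neg at hlt
  exact hnot ((hmemS : IsNAbsorbing (I ^ m) _).mono (by omega))
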